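/- For any factorization X = L Rᴴ with L ∈ ℂ^{n×r}, R ∈ ℂ^{m×r}, one has ‖X‖_* ≤ (1/2)(‖L‖_F² + ‖R‖_F²). -/

import Mathlib

open Matrix BigOperators


noncomputable section NNAux
local notation "⟪" x ", " y "⟫" => @inner ℂ _ _ x y

/-- squared ℓ² norm of a complex vector -/
def nsqAux {k : ℕ} (x : Fin k → ℂ) : ℝ := ∑ i, ‖x i‖ ^ 2

lemma nsqAux_nonneg {k : ℕ} (x : Fin k → ℂ) : 0 ≤ nsqAux x :=
  Finset.sum_nonneg fun _ _ => sq_nonneg _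

/-- view a plain vector as an element of Euclidean space -/
def toE {k : ℕ} (x : Fin k → ℂ) : EuclideanSpace ℂ (Fin k) := (WithLp.equiv 2 _).symm x

lemma inner_toE {k : ℕ} (x y : Fin k → ℂ) : ⟪toE x, toE y⟫ = star x ⬝ᵥ y := by
  simp [toE, PiLp.inner_apply, RCLike.inner_apply, dotProduct, mul_comm]

lemma norm_toE {k : ℕ} (x : Fin k → ℂ) : ‖toE x‖ = Real.sqrt (nsqAux x) := by
  rw [EuclideanSpace.norm_eq]; rfl

lemma dot_self_eq_nsqAux {k : ℕ} (x : Fin k → ℂ) : star x ⬝ᵥ x = (nsqAux x : ℂ) := by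
  simp only [dotProduct, nsqAux, Pi.star_apply]
  push_cast
  refine Finset.sum_congr rfl fun i _ => ?_
  rw [show (star (x i)) = (starRingEnd ℂ) (x i) from rfl, RCLike.conj_mul]
  norm_cast

lemma dot_shiftAux {a c : ℕ} (M : Matrix (Fin a) (Fin c) ℂ) (x : Fin a → ℂ) (y : Fin c → ℂ) :
    star (M *ᵥ y) ⬝ᵥ x = star y ⬝ᵥ (Mᴴ *ᵥ x) := by
  rw [star_mulVec, dotProduct_mulVec]

/-- Parseval for an orthonormal basis of Euclidean space, in coordinates. -/
lemma parsevalAux {k : ℕ} (b : OrthonormalBasis (Fin k) ℂ (EuclideanSpace ℂ (Fin k)))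
    (c : Fin k → ℂ) : ∑ i, ‖⟪b i, toE c⟫‖ ^ 2 = nsqAux c := by
  have h1 : ∀ i, b.repr (toE c) i = ⟪b i, toE c⟫ := fun i => b.repr_apply_apply (toE c) i
  have h2 : ‖b.repr (toE c)‖ = ‖toE c‖ := b.repr.norm_map (toE c)
  have h3 : ∑ i, ‖b.repr (toE c) i‖ ^ 2 = ‖b.repr (toE c)‖ ^ 2 := by
    rw [EuclideanSpace.norm_eq, Real.sq_sqrt (Finset.sum_nonneg fun _ _ => sq_nonneg _)]
  calc ∑ i, ‖⟪b i, toE c⟫‖ ^ 2 = ∑ i, ‖b.repr (toE c) i‖ ^ 2 :=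
        Finset.sum_congr rfl fun i _ => by rw [h1]
  _ = ‖b.repr (toE c)‖ ^ 2 := h3
  _ = ‖toE c‖ ^ 2 := by rw [h2]
  _ = nsqAux c := by rw [norm_toE, Real.sq_sqrt (nsqAux_nonneg c)]

end NNAux

noncomputable section NNMain
local notation "⟪" x ", " y "⟫" => @inner ℂ _ _ x y

namespace NNProof

lemma main {n m r : ℕ} (L : Matrix (Fin n) (Fin r) ℂ) (R : Matrix (Fin m) (Fin r) ℂ) :
    (∑ i, Real.sqrt ((Matrix.isHermitian_conjTranspose_mul_self (L * Rᴴ)).eigenvalues i))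
      ≤ (1 / 2) * ((∑ j, ∑ k, ‖L j k‖ ^ 2) + (∑ j, ∑ k, ‖R j k‖ ^ 2)) := by
  classical
  have hA := Matrix.isHermitian_conjTranspose_mul_self (L * Rᴴ)
  set lam : Fin m → ℝ := hA.eigenvalues with hlamdef
  set b := hA.eigenvectorBasis with hbdef
  set v : Fin m → (Fin m → ℂ) := fun i => ⇑(b i) with hvdef
  set w : Fin m → (Fin n → ℂ) := fun i => (L * Rᴴ) *ᵥ v i with hwdef
  set p : Fin m → (Fin r → ℂ) := fun i => Rᴴ *ᵥ v i with hpdef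
  -- orthonormality of v
  have hvv : ∀ i j, star (v i) ⬝ᵥ v j = if i = j then 1 else 0 := by
    intro i j
    have hb := orthonormal_iff_ite.mp b.orthonormal i j
    rw [← inner_toE]
    exact hb
  have hXv : ∀ j, (L * Rᴴ)ᴴ *ᵥ ((L * Rᴴ) *ᵥ v j) = lam j • v j := fun j =>
    (mulVec_mulVec (v j) (L * Rᴴ)ᴴ (L * Rᴴ)).trans (hA.mulVec_eigenvectorBasis j)
  -- key dot products of w
  have hww : ∀ i j, star (w i) ⬝ᵥ w j = (lam j : ℂ) * (if i = j then 1 else 0) := by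
    intro i j
    rw [hwdef]
    simp only
    rw [dot_shiftAux, hXv j, dotProduct_smul, hvv i j]
    simp [Complex.real_smul]
  -- eigenvalues are the squared norms of the w's
  have hlam_nsq : ∀ i, lam i = nsqAux (w i) := by
    intro i
    have h := hww i i
    rw [if_pos rfl, mul_one, dot_self_eq_nsqAux] at h
    exact_mod_cast h.symm
  have hlam_nonneg : ∀ i, 0 ≤ lam i := fun i => (hlam_nsq i).symm ▸ nsqAux_nonneg (w i)
  -- normalized left singular vectors
  set u : Fin m → (Fin n → ℂ) :=
    fun i => if lam i = 0 then 0 else ((Real.sqrt (lam i) : ℂ))⁻¹ • w i with hudef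
  have hw_factor : ∀ i, w i = L *ᵥ p i := by
    intro i
    rw [hwdef, hpdef]
    simp only
    rw [← mulVec_mulVec]
  -- the key pointwise inequality
  have key : ∀ i, Real.sqrt (lam i) ≤
      (1 / 2) * (nsqAux (Lᴴ *ᵥ u i) + nsqAux (p i)) := by
    intro i
    by_cases h0 : lam i = 0
    · rw [h0, Real.sqrt_zero]
      have := nsqAux_nonneg (Lᴴ *ᵥ u i)
      have := nsqAux_nonneg (p i)
      linarith
    · have hpos : 0 < lam i := lt_of_le_of_ne (hlam_nonneg i) (Ne.symm h0)
      set s := Real.sqrt (lam i) with hsdef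
      have hs : 0 < s := Real.sqrt_pos.mpr hpos
      have hui : u i = ((s : ℂ))⁻¹ • w i := by rw [hudef]; simp only; rw [if_neg h0]
      have h1 : star (u i) ⬝ᵥ w i = (s : ℂ) := by
        rw [hui, star_smul, smul_dotProduct, hww i i, if_pos rfl, mul_one]
        rw [star_inv₀, Complex.star_def, Complex.conj_ofReal]
        rw [show (lam i : ℂ) = (s : ℂ) * (s : ℂ) by
          rw [← Complex.ofReal_mul, Real.mul_self_sqrt (hlam_nonneg i)]]
        rw [smul_eq_mul]
        field_simp
      have h2 : star (u i) ⬝ᵥ w i = star (Lᴴ *ᵥ u i) ⬝ᵥ p i := by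
        rw [hw_factor i, dot_shiftAux, conjTranspose_conjTranspose]
      have h3 : (s : ℂ) = ⟪toE (Lᴴ *ᵥ u i), toE (p i)⟫ := by
        rw [inner_toE, ← h2, h1]
      have h4 : s ≤ ‖toE (Lᴴ *ᵥ u i)‖ * ‖toE (p i)‖ := by
        calc s = ‖(s : ℂ)‖ := by
              rw [Complex.norm_real, Real.norm_eq_abs, abs_of_pos hs]
        _ = ‖⟪toE (Lᴴ *ᵥ u i), toE (p i)⟫‖ := by rw [h3]
        _ ≤ _ := norm_inner_le_norm _ _
      have h5 : ‖toE (Lᴴ *ᵥ u i)‖ * ‖toE (p i)‖ ≤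
          (1 / 2) * (nsqAux (Lᴴ *ᵥ u i) + nsqAux (p i)) := by
        have := two_mul_le_add_sq (‖toE (Lᴴ *ᵥ u i)‖) (‖toE (p i)‖)
        have e1 : ‖toE (Lᴴ *ᵥ u i)‖ ^ 2 = nsqAux (Lᴴ *ᵥ u i) := by
          rw [norm_toE, Real.sq_sqrt (nsqAux_nonneg _)]
        have e2 : ‖toE (p i)‖ ^ 2 = nsqAux (p i) := by
          rw [norm_toE, Real.sq_sqrt (nsqAux_nonneg _)]
        nlinarith
      exact h4.trans h5
  -- sum over p's : Parseval
  have hsump : ∑ i, nsqAux (p i) = ∑ j, ∑ k, ‖R j k‖ ^ 2 := by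
    simp only [nsqAux]
    rw [Finset.sum_comm]
    rw [Finset.sum_comm (γ := Fin m)]
    refine Finset.sum_congr rfl fun k _ => ?_
    have hcol : ∀ i, p i k = ⟪toE (fun j => R j k), b i⟫ := by
      intro i
      rw [show b i = toE (v i) from rfl, inner_toE]
      rw [hpdef]
      simp [mulVec, dotProduct, Matrix.conjTranspose_apply, mul_comm]
    calc ∑ i, ‖p i k‖ ^ 2 = ∑ i, ‖⟪b i, toE (fun j => R j k)⟫‖ ^ 2 := by
          refine Finset.sum_congr rfl fun i _ => ?_
          rw [hcol i, ← norm_inner_symm]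
    _ = nsqAux (fun j => R j k) := parsevalAux b _
    _ = ∑ j, ‖R j k‖ ^ 2 := rfl
  -- orthonormality of the nonzero u's
  have huu : Orthonormal ℂ (fun i : {i : Fin m // lam i ≠ 0} => toE (u i)) := by
    rw [orthonormal_iff_ite]
    intro i j
    rw [inner_toE]
    have hui : u i = ((Real.sqrt (lam i) : ℂ))⁻¹ • w i := by
      rw [hudef]; simp only; rw [if_neg i.2]
    have huj : u j = ((Real.sqrt (lam j) : ℂ))⁻¹ • w j := by
      rw [hudef]; simp only; rw [if_neg j.2]
    rw [hui, huj, star_smul, smul_dotProduct, dotProduct_smul, hww i j]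
    rw [star_inv₀, Complex.star_def, Complex.conj_ofReal]
    by_cases hij : (i : Fin m) = j
    · have : i = j := Subtype.ext hij
      subst this
      rw [if_pos rfl, if_pos rfl, mul_one]
      have hpos : 0 < lam i := lt_of_le_of_ne (hlam_nonneg i) (Ne.symm i.2)
      have hs : (0:ℝ) < Real.sqrt (lam i) := Real.sqrt_pos.mpr hpos
      rw [show ((lam i : ℝ) : ℂ) = (Real.sqrt (lam i) : ℂ) * (Real.sqrt (lam i) : ℂ) by
        rw [← Complex.ofReal_mul, Real.mul_self_sqrt (hlam_nonneg i)]]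
      rw [smul_eq_mul, smul_eq_mul]
      field_simp
      exact div_self (Complex.ofReal_ne_zero.mpr hs.ne')
    · rw [if_neg hij, if_neg (fun h => hij (congrArg Subtype.val h))]
      rw [mul_zero, smul_zero, smul_zero]
  -- Bessel bound for the u-sum
  have hsumu : ∑ i, nsqAux (Lᴴ *ᵥ u i) ≤ ∑ j, ∑ k, ‖L j k‖ ^ 2 := by
    have swapL : ∑ j, ∑ k, ‖L j k‖ ^ 2 = ∑ k : Fin r, ∑ j : Fin n, ‖L j k‖ ^ 2 :=
      Finset.sum_comm
    rw [swapL]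
    simp only [nsqAux]
    rw [Finset.sum_comm]
    refine Finset.sum_le_sum fun k _ => ?_
    have hentry : ∀ i, (Lᴴ *ᵥ u i) k = ⟪toE (fun j => L j k), toE (u i)⟫ := by
      intro i
      rw [inner_toE]
      simp [mulVec, dotProduct, Matrix.conjTranspose_apply, mul_comm]
    calc ∑ i, ‖(Lᴴ *ᵥ u i) k‖ ^ 2
        = ∑ i ∈ Finset.univ.filter (fun i => lam i ≠ 0), ‖(Lᴴ *ᵥ u i) k‖ ^ 2 := by
          refine (Finset.sum_filter_of_ne fun i _ hne => ?_).symm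
          intro h0
          apply hne
          have : u i = 0 := by rw [hudef]; simp only; rw [if_pos h0]
          rw [this]
          simp [mulVec, dotProduct]
    _ = ∑ i : {i : Fin m // lam i ≠ 0}, ‖(Lᴴ *ᵥ u i) k‖ ^ 2 := by
          exact Finset.sum_subtype _ (by simp) _
    _ = ∑ i : {i : Fin m // lam i ≠ 0}, ‖⟪toE (u i), toE (fun j => L j k)⟫‖ ^ 2 := by
          refine Finset.sum_congr rfl fun i _ => ?_
          rw [hentry i, ← norm_inner_symm]
    _ ≤ ‖toE (fun j => L j k)‖ ^ 2 := huu.sum_inner_products_le _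
    _ = ∑ j, ‖L j k‖ ^ 2 := by rw [norm_toE, Real.sq_sqrt (nsqAux_nonneg _)]; rfl
  -- assemble
  calc (∑ i, Real.sqrt ((Matrix.isHermitian_conjTranspose_mul_self (L * Rᴴ)).eigenvalues i))
      = ∑ i, Real.sqrt (lam i) := rfl
  _ ≤ ∑ i, (1 / 2) * (nsqAux (Lᴴ *ᵥ u i) + nsqAux (p i)) :=
      Finset.sum_le_sum fun i _ => key i
  _ = (1 / 2) * ((∑ i, nsqAux (Lᴴ *ᵥ u i)) + ∑ i, nsqAux (p i)) := by
      rw [← Finset.mul_sum, Finset.sum_add_distrib]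
  _ ≤ (1 / 2) * ((∑ j, ∑ k, ‖L j k‖ ^ 2) + (∑ j, ∑ k, ‖R j k‖ ^ 2)) := by
      rw [hsump]
      have := hsumu
      linarith

end NNProof
end NNMain

/-- Frobenius norm of a complex matrix. -/
noncomputable def frobNorm {n m : ℕ} (X : Matrix (Fin n) (Fin m) ℂ) : ℝ :=
  Real.sqrt (∑ i, ∑ j, ‖X i j‖ ^ 2)

/-- Nuclear norm: sum of singular values (square roots of eigenvalues of XᴴX). -/
noncomputable def nuclearNorm {n m : ℕ} (X : Matrix (Fin n) (Fin m) ℂ) : ℝ :=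
  ∑ i, Real.sqrt ((Matrix.isHermitian_conjTranspose_mul_self X).eigenvalues i)

/-- For any factorization `X = L Rᴴ`, one has `‖X‖_* ≤ (1/2)(‖L‖_F² + ‖R‖_F²)`. -/
theorem nuclearNorm_le_half_sq_factors {n m r : ℕ}
    (L : Matrix (Fin n) (Fin r) ℂ) (R : Matrix (Fin m) (Fin r) ℂ) :
    nuclearNorm (L * Rᴴ) ≤ (1 / 2) * (frobNorm L ^ 2 + frobNorm R ^ 2) := by
  have h := NNProof.main L R
  have hL : frobNorm L ^ 2 = ∑ j, ∑ k, ‖L j k‖ ^ 2 :=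
    Real.sq_sqrt (Finset.sum_nonneg fun _ _ => Finset.sum_nonneg fun _ _ => sq_nonneg _)
  have hR : frobNorm R ^ 2 = ∑ j, ∑ k, ‖R j k‖ ^ 2 :=
    Real.sq_sqrt (Finset.sum_nonneg fun _ _ => Finset.sum_nonneg fun _ _ => sq_nonneg _)
  rw [hL, hR]
  exact h
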